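/- (Proposition 1) Let G=(V,E) be a finite simple undirected graph with edge weights w:E→ℚ, let e∈E with w(e)≠0, and let U⊂V be such that e∈δ(U). If |w(e)| ≥ Σ_{a∈δ(U)∖{e}} |w(a)|, then there exists an optimal solution x∈{0,1}^E of the maximum-cut instance (G,w) with x(e)=β, where β=1 if w(e)>0 and β=0 if w(e)<0. -/

import Mathlib

variable {V : Type*}

/-- `e` is an edge of `G` that crosses the cut induced by the vertex set `U`,
i.e. `e ∈ δ(U) := {{u,v} ∈ E : u ∈ U, v ∉ U}`. -/
def inCutSet (G : SimpleGraph V) (U : Set V) (e : Sym2 V) : Prop :=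
  e ∈ G.edgeSet ∧ (∃ u ∈ e, u ∈ U) ∧ ∃ v ∈ e, v ∉ U

/-- The edge cut `δ(U)` as a finset. -/
noncomputable def cutFinset [Fintype V] (G : SimpleGraph V) (U : Set V) :
    Finset (Sym2 V) := by
  classical
  exact Finset.univ.filter (inCutSet G U)

/-- The weight `w(δ(U))` of the cut induced by `U`. -/
noncomputable def cutWeight [Fintype V] (G : SimpleGraph V) (w : Sym2 V → ℚ) (U : Set V) : ℚ :=
  ∑ e ∈ cutFinset G U, w e

open scoped Classical

lemma inCutSet_iff (G : SimpleGraph V) (W : Set V) {u v : V} (h : G.Adj u v) :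
    inCutSet G W s(u, v) ↔ Xor' (u ∈ W) (v ∈ W) := by
  unfold inCutSet
  simp only [SimpleGraph.mem_edgeSet, Sym2.mem_iff]
  constructor
  · rintro ⟨_, ⟨a, ha, haW⟩, ⟨b, hb, hbW⟩⟩
    rcases ha with rfl | rfl <;> rcases hb with rfl | rfl <;> simp_all [Xor']
  · rintro (⟨hu, hv⟩ | ⟨hv, hu⟩)
    · exact ⟨h, ⟨u, Or.inl rfl, hu⟩, ⟨v, Or.inr rfl, hv⟩⟩
    · exact ⟨h, ⟨v, Or.inr rfl, hv⟩, ⟨u, Or.inl rfl, hu⟩⟩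

lemma inCutSet_symmDiff (G : SimpleGraph V) (W U : Set V) {e : Sym2 V}
    (he : e ∈ G.edgeSet) :
    inCutSet G (symmDiff W U) e ↔ Xor' (inCutSet G W e) (inCutSet G U e) := by
  induction e using Sym2.ind with
  | _ u v =>
    have h : G.Adj u v := he
    rw [inCutSet_iff G _ h, inCutSet_iff G _ h, inCutSet_iff G _ h]
    simp only [Set.mem_symmDiff, Xor', xor_def]
    tauto

lemma edge_of_inCutSet {G : SimpleGraph V} {U : Set V} {e : Sym2 V}
    (h : inCutSet G U e) : e ∈ G.edgeSet := h.1

lemma cutWeight_eq_sum [Fintype V] [DecidableEq V] (G : SimpleGraph V)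
    (w : Sym2 V → ℚ) (S : Set V) :
    cutWeight G w S = ∑ a : Sym2 V, if inCutSet G S a then w a else 0 := by
  classical
  rw [cutWeight, cutFinset]
  rw [Finset.sum_filter]

lemma cutWeight_symmDiff [Fintype V] [DecidableEq V] (G : SimpleGraph V)
    (w : Sym2 V → ℚ) (W U : Set V) :
    cutWeight G w (symmDiff W U) =
      cutWeight G w W + ∑ a ∈ cutFinset G U, (if inCutSet G W a then -w a else w a) := by
  classical
  rw [cutWeight_eq_sum, cutWeight_eq_sum, cutFinset, Finset.sum_filter,
    ← Finset.sum_add_distrib]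
  refine Finset.sum_congr rfl fun a _ => ?_
  by_cases ha : a ∈ G.edgeSet
  · rw [inCutSet_symmDiff G W U ha]
    by_cases hW : inCutSet G W a <;> by_cases hU : inCutSet G U a <;>
      simp [hW, hU, Xor']
  · have h1 : ¬ inCutSet G (symmDiff W U) a := fun h => ha (edge_of_inCutSet h)
    have h2 : ¬ inCutSet G W a := fun h => ha (edge_of_inCutSet h)
    have h3 : ¬ inCutSet G U a := fun h => ha (edge_of_inCutSet h)
    simp [h1, h2, h3]

/-- Proposition 1: if `|w(e)| ≥ ∑_{a ∈ δ(U)∖{e}} |w(a)|` for some cut `δ(U)` containing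
`e`, then there is an optimal solution of the maximum-cut instance `(G,w)` in which
`e` is a cut edge if `w(e) > 0`, resp. a non-cut edge if `w(e) < 0`. -/
theorem stmt3 [Fintype V] [DecidableEq V] (G : SimpleGraph V) (w : Sym2 V → ℚ)
    (e : Sym2 V) (he : e ∈ G.edgeSet) (hw : w e ≠ 0)
    (U : Set V) (hU : U ⊂ Set.univ) (heU : inCutSet G U e)
    (hbound : |w e| ≥ ∑ a ∈ (cutFinset G U).erase e, |w a|) :
    ∃ W : Set V, (∀ S : Set V, cutWeight G w S ≤ cutWeight G w W) ∧
      (0 < w e → inCutSet G W e) ∧ (w e < 0 → ¬ inCutSet G W e) := by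
  classical
  -- get a maximizer
  obtain ⟨F, -, hF⟩ := Finset.exists_max_image (Finset.univ : Finset (Finset V))
      (fun S => cutWeight G w (↑S : Set V)) ⟨∅, Finset.mem_univ _⟩
  set W₀ : Set V := (↑F : Set V) with hW₀
  have hmax : ∀ S : Set V, cutWeight G w S ≤ cutWeight G w W₀ := by
    intro S
    have := hF S.toFinset (Finset.mem_univ _)
    simpa using this
  have heUcut : e ∈ cutFinset G U := by
    simp [cutFinset, heU]
  -- the flip difference is nonnegative in the "bad" cases
  have hflip : ∀ W : Set V,
      (0 < w e → ¬ inCutSet G W e) → (w e < 0 → inCutSet G W e) →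
      cutWeight G w W ≤ cutWeight G w (symmDiff W U) := by
    intro W hpos hneg
    rw [cutWeight_symmDiff, ← Finset.add_sum_erase _ _ heUcut]
    have hterm : |w e| = (if inCutSet G W e then -w e else w e) := by
      rcases lt_or_gt_of_ne hw with h | h
      · rw [if_pos (hneg h), abs_of_neg h]
      · rw [if_neg (hpos h), abs_of_pos h]
    have hrest : -∑ a ∈ (cutFinset G U).erase e, |w a| ≤
        ∑ a ∈ (cutFinset G U).erase e, (if inCutSet G W a then -w a else w a) := by
      rw [← Finset.sum_neg_distrib]
      refine Finset.sum_le_sum fun a _ => ?_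
      by_cases h : inCutSet G W a <;> simp [h, neg_abs_le, neg_le_abs, le_abs_self]
    nlinarith [hrest, hbound, hterm]
  rcases lt_or_gt_of_ne hw with hneg | hpos
  · -- w e < 0 : want e not in cut
    by_cases h : inCutSet G W₀ e
    · refine ⟨symmDiff W₀ U, fun S => le_trans (hmax S)
        (hflip W₀ (fun hp => absurd hp (not_lt_of_gt hneg)) (fun _ => h)),
        fun hp => absurd hp (not_lt_of_gt hneg), fun _ => ?_⟩
      rw [inCutSet_symmDiff G W₀ U he]
      simp [Xor', h, heU]
    · exact ⟨W₀, hmax, fun hp => absurd hp (not_lt_of_gt hneg), fun _ => h⟩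
  · -- 0 < w e : want e in cut
    by_cases h : inCutSet G W₀ e
    · exact ⟨W₀, hmax, fun _ => h, fun hn => absurd hn (not_lt_of_gt hpos)⟩
    · refine ⟨symmDiff W₀ U, fun S => le_trans (hmax S)
        (hflip W₀ (fun _ => h) (fun hn => absurd hn (not_lt_of_gt hpos))),
        fun _ => ?_, fun hn => absurd hn (not_lt_of_gt hpos)⟩
      rw [inCutSet_symmDiff G W₀ U he]
      simp [Xor', h, heU]
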